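/- Define polynomials F_a(q) by F_0 = F_1 = 1 and F_a(q) = F_{a-1}(q) + q·F_{a-2}(q). Let Φ_a = (a/2)·F_a'(1) − (1/2)·F_a''(1) (derivatives in q). Then Σ_{a≥0} Φ_a x^{a+1} = x^3/(1-x-x^2)^3 as formal power series. -/

import Mathlib

open Polynomial PowerSeries

lemma phi_rec (f d s : ℕ → ℚ)
    (hf : ∀ a, f (a+2) = f (a+1) + f a)
    (hd : ∀ a, d (a+2) = d (a+1) + d a + f a)
    (hs : ∀ a, s (a+2) = s (a+1) + s a + 2 * d a)
    (m : ℕ) :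
    ((m:ℚ)+6)/2 * d (m+6) - s (m+6)/2
      = 3 * (((m:ℚ)+5)/2 * d (m+5) - s (m+5)/2)
        - 5 * (((m:ℚ)+3)/2 * d (m+3) - s (m+3)/2)
        + 3 * (((m:ℚ)+1)/2 * d (m+1) - s (m+1)/2)
        + ((m:ℚ)/2 * d m - s m / 2) := by
  have hd6 : d (m+6) = d (m+5) + d (m+4) + f (m+4) := hd (m+4)
  have hd5 : d (m+5) = d (m+4) + d (m+3) + f (m+3) := hd (m+3)
  have hd4 : d (m+4) = d (m+3) + d (m+2) + f (m+2) := hd (m+2)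
  have hd3 : d (m+3) = d (m+2) + d (m+1) + f (m+1) := hd (m+1)
  have hd2 : d (m+2) = d (m+1) + d m + f m := hd m
  have hs6 : s (m+6) = s (m+5) + s (m+4) + 2 * d (m+4) := hs (m+4)
  have hs5 : s (m+5) = s (m+4) + s (m+3) + 2 * d (m+3) := hs (m+3)
  have hs4 : s (m+4) = s (m+3) + s (m+2) + 2 * d (m+2) := hs (m+2)
  have hs3 : s (m+3) = s (m+2) + s (m+1) + 2 * d (m+1) := hs (m+1)
  have hs2 : s (m+2) = s (m+1) + s m + 2 * d m := hs m
  have hf4 : f (m+4) = f (m+3) + f (m+2) := hf (m+2)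
  have hf3 : f (m+3) = f (m+2) + f (m+1) := hf (m+1)
  have hf2 : f (m+2) = f (m+1) + f m := hf m
  rw [hd6, hs6, hd5, hs5, hd4, hs4, hd3, hs3, hd2, hs2, hf4, hf3, hf2]
  ring

lemma gen_fun (f d s : ℕ → ℚ)
    (hf0 : f 0 = 1) (hf1 : f 1 = 1) (hd0 : d 0 = 0) (hd1 : d 1 = 0)
    (hs0 : s 0 = 0) (hs1 : s 1 = 0)
    (hf : ∀ a, f (a+2) = f (a+1) + f a)
    (hd : ∀ a, d (a+2) = d (a+1) + d a + f a)
    (hs : ∀ a, s (a+2) = s (a+1) + s a + 2 * d a) :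
    (PowerSeries.mk (fun m : ℕ =>
        if m = 0 then (0 : ℚ)
        else ((m - 1 : ℕ) : ℚ) / 2 * d (m - 1) - 1 / 2 * s (m - 1)) : PowerSeries ℚ)
      = PowerSeries.X ^ 3 * ((1 - PowerSeries.X - PowerSeries.X ^ 2) ^ 3)⁻¹ := by
  have hconst : PowerSeries.constantCoeff ((1 - PowerSeries.X - PowerSeries.X ^ 2 : PowerSeries ℚ) ^ 3) ≠ 0 := by
    simp
  rw [PowerSeries.eq_mul_inv_iff_mul_eq hconst]
  set A : PowerSeries ℚ := PowerSeries.mk (fun m : ℕ =>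
        if m = 0 then (0 : ℚ)
        else ((m - 1 : ℕ) : ℚ) / 2 * d (m - 1) - 1 / 2 * s (m - 1)) with hA
  have h3 : (PowerSeries.C (R := ℚ)) 3 = 3 := map_ofNat _ 3
  have h5 : (PowerSeries.C (R := ℚ)) 5 = 5 := map_ofNat _ 5
  have expand : A * (1 - PowerSeries.X - PowerSeries.X ^ 2) ^ 3
      = A - PowerSeries.C (R := ℚ) 3 * (A * PowerSeries.X ^ 1)
        + PowerSeries.C (R := ℚ) 5 * (A * PowerSeries.X ^ 3)
        - PowerSeries.C (R := ℚ) 3 * (A * PowerSeries.X ^ 5) - A * PowerSeries.X ^ 6 := by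
    rw [h3, h5]; ring
  rw [expand]
  ext n
  simp only [map_sub, map_add, PowerSeries.coeff_C_mul, PowerSeries.coeff_mul_X_pow',
    PowerSeries.coeff_mk, PowerSeries.coeff_X_pow, hA]
  -- values
  have hf2 : f 2 = 2 := by have := hf 0; rw [hf0, hf1] at this; linarith
  have hf3 : f 3 = 3 := by have := hf 1; rw [hf1, hf2] at this; linarith
  have hf4 : f 4 = 5 := by have := hf 2; rw [hf2, hf3] at this; linarith
  have hd2 : d 2 = 1 := by have := hd 0; rw [hd0, hd1, hf0] at this; linarith
  have hd3 : d 3 = 2 := by have := hd 1; rw [hd1, hd2, hf1] at this; linarith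
  have hd4 : d 4 = 5 := by have := hd 2; rw [hd2, hd3, hf2] at this; linarith
  have hd5 : d 5 = 10 := by have := hd 3; rw [hd3, hd4, hf3] at this; linarith
  have hs2 : s 2 = 0 := by have := hs 0; rw [hs0, hs1, hd0] at this; linarith
  have hs3 : s 3 = 0 := by have := hs 1; rw [hs1, hs2, hd1] at this; linarith
  have hs4 : s 4 = 2 := by have := hs 2; rw [hs2, hs3, hd2] at this; linarith
  have hs5 : s 5 = 6 := by have := hs 3; rw [hs3, hs4, hd3] at this; linarith
  rcases n with _|_|_|_|_|_|_|k
  · norm_num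
  · norm_num [hd0, hd1, hd2, hd3, hd4, hd5, hs0, hs1, hs2, hs3, hs4, hs5]
  · norm_num [hd0, hd1, hd2, hd3, hd4, hd5, hs0, hs1, hs2, hs3, hs4, hs5]
  · norm_num [hd0, hd1, hd2, hd3, hd4, hd5, hs0, hs1, hs2, hs3, hs4, hs5]
  · norm_num [hd0, hd1, hd2, hd3, hd4, hd5, hs0, hs1, hs2, hs3, hs4, hs5]
  · norm_num [hd0, hd1, hd2, hd3, hd4, hd5, hs0, hs1, hs2, hs3, hs4, hs5]
  · norm_num [hd0, hd1, hd2, hd3, hd4, hd5, hs0, hs1, hs2, hs3, hs4, hs5]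
  · have key := phi_rec f d s hf hd hs k
    have e1 : k + 1 + 1 + 1 + 1 + 1 + 1 + 1 - 1 = k + 6 := by omega
    norm_num
    push_cast
    linarith [key]


open PowerSeries in
/-- With `F_0 = F_1 = 1`, `F_a = F_{a-1} + q F_{a-2}` and
`Φ_a = (a/2)F_a'(1) - (1/2)F_a''(1)`, we have
`Σ_{a≥0} Φ_a x^{a+1} = x³/(1-x-x²)³` in `ℚ[[x]]`. -/
theorem total_size_generating_function (F : ℕ → Polynomial ℚ)
    (h0 : F 0 = 1) (h1 : F 1 = 1)
    (hrec : ∀ a : ℕ, F (a + 2) = F (a + 1) + Polynomial.X * F a) :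
    (PowerSeries.mk (fun m : ℕ =>
        if m = 0 then (0 : ℚ)
        else ((m - 1 : ℕ) : ℚ) / 2 * (Polynomial.derivative (F (m - 1))).eval 1
          - 1 / 2 * (Polynomial.derivative (Polynomial.derivative (F (m - 1)))).eval 1) :
      PowerSeries ℚ) =
      PowerSeries.X ^ 3 * ((1 - PowerSeries.X - PowerSeries.X ^ 2) ^ 3)⁻¹ := by
  refine gen_fun (fun a => (F a).eval 1)
    (fun a => (Polynomial.derivative (F a)).eval 1)
    (fun a => (Polynomial.derivative (Polynomial.derivative (F a))).eval 1)
    ?_ ?_ ?_ ?_ ?_ ?_ ?_ ?_ ?_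
  · simp [h0]
  · simp [h1]
  · simp [h0]
  · simp [h1]
  · simp [h0]
  · simp [h1]
  · intro a; beta_reduce; rw [hrec a]; simp
  · intro a; beta_reduce; rw [hrec a]; simp [Polynomial.derivative_mul]; ring
  · intro a; beta_reduce; rw [hrec a]; simp [Polynomial.derivative_mul]; ring
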